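/- arXiv:2011.08066 — 4 statements merged into one kernel-verified Lean document; each statement's English description precedes it below -/
import Mathlib

section
/- Let α > −1 be a real number. Then the improper integral ∫_ℝ dy/(cosh y + α) converges and equals: (4/√(1−α²))·arctan(√((1−α)/(1+α))) if |α| < 1; 2 if α = 1; and (2/√(α²−1))·log(α + √(α²−1)) if α > 1. -/
open MeasureTheory Real

section GR3513aux
open Filter Topology

lemma GR3513_denom_pos {α : ℝ} (hα : -1 < α) (y : ℝ) : 0 < Real.cosh y + α := by
  nlinarith [Real.one_le_cosh y]

lemma GR3513_denom_ge {α : ℝ} (hα : -1 < α) (y : ℝ) :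
    min 1 (1 + α) * Real.cosh y ≤ Real.cosh y + α := by
  rcases le_or_gt 0 α with h | h
  · nlinarith [Real.one_le_cosh y, min_le_left (1:ℝ) (1+α), Real.cosh_pos (x := y)]
  · nlinarith [Real.one_le_cosh y, min_le_right (1:ℝ) (1+α), Real.cosh_pos (x := y)]

lemma GR3513_intble {α : ℝ} (hα : -1 < α) :
    Integrable (fun y : ℝ => 1 / (Real.cosh y + α)) := by
  set m := min 1 (1 + α) with hmdef
  have hm : 0 < m := lt_min one_pos (by linarith)
  have hcont : Continuous fun y : ℝ => 1 / (Real.cosh y + α) :=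
    continuous_const.div (Real.continuous_cosh.add continuous_const)
      (fun y => (GR3513_denom_pos hα y).ne')
  have bound : ∀ (s y : ℝ), Real.exp s ≤ 2 * Real.cosh y →
      ‖1 / (Real.cosh y + α)‖ ≤ 2 / m * Real.exp (-s) := by
    intro s y hs
    rw [Real.norm_eq_abs, abs_of_pos (one_div_pos.mpr (GR3513_denom_pos hα y))]
    have h2 : m * Real.exp s / 2 ≤ Real.cosh y + α := by
      nlinarith [GR3513_denom_ge hα y, mul_le_mul_of_nonneg_left hs hm.le]
    calc 1 / (Real.cosh y + α) ≤ 1 / (m * Real.exp s / 2) :=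
          one_div_le_one_div_of_le (by positivity) h2
      _ = 2 / m * Real.exp (-s) := by
          rw [Real.exp_neg]; field_simp
  rw [← integrableOn_univ, ← Set.Iic_union_Ioi (a := (0:ℝ)), integrableOn_union]
  constructor
  · apply Integrable.mono' (g := fun y => 2 / m * Real.exp y)
    · exact (integrableOn_exp_Iic 0).const_mul _
    · exact hcont.aestronglyMeasurable.restrict
    · filter_upwards with y
      have := bound (-y) y (by rw [Real.cosh_eq]; nlinarith [Real.exp_pos y])
      simpa using this
  · apply Integrable.mono' (g := fun y => 2 / m * Real.exp (-y))
    · exact ((exp_neg_integrableOn_Ioi 0 one_pos).congr_fun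
        (fun x _ => by ring_nf) measurableSet_Ioi).const_mul _
    · exact hcont.aestronglyMeasurable.restrict
    · filter_upwards with y
      exact bound y y (by rw [Real.cosh_eq]; nlinarith [Real.exp_pos (-y)])

lemma GR3513_cosh_form {α : ℝ} (hα : -1 < α) (y : ℝ) :
    1 / (Real.cosh y + α) = 2 * Real.exp y / ((Real.exp y)^2 + 2*α*Real.exp y + 1) := by
  have hu := Real.exp_pos y
  have h := GR3513_denom_pos hα y
  rw [Real.cosh_eq] at h ⊢
  rw [Real.exp_neg] at h ⊢
  field_simp
  ring

lemma GR3513_case1 {α : ℝ} (h1 : -1 < α) (h2 : α < 1) :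
    ∫ y : ℝ, 1 / (Real.cosh y + α) =
      4 / Real.sqrt (1 - α^2) * Real.arctan (Real.sqrt ((1-α)/(1+α))) := by
  set c := Real.sqrt (1 - α^2) with hcdef
  set k := Real.sqrt ((1-α)/(1+α)) with hkdef
  have ha1 : (0:ℝ) < 1 + α := by linarith
  have ha2 : (0:ℝ) < 1 - α := by linarith
  have hc : 0 < c := Real.sqrt_pos.mpr (by nlinarith)
  have hk2 : k^2 * (1+α) = 1 - α := by
    rw [hkdef, sq_sqrt (by positivity)]; field_simp
  have hck : k * (1+α) = c := by
    rw [hkdef, hcdef]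
    rw [show (1:ℝ) - α^2 = (1-α)/(1+α) * (1+α)^2 by field_simp; ring]
    rw [Real.sqrt_mul (by positivity), Real.sqrt_sq ha1.le]
  set F : ℝ → ℝ := fun y => 2/c * Real.arctan (k * ((Real.exp y - 1)/(Real.exp y + 1))) with hFdef
  have hderiv : ∀ y, HasDerivAt F (1 / (Real.cosh y + α)) y := by
    intro y
    have hu := Real.hasDerivAt_exp y
    have hden : Real.exp y + 1 ≠ 0 := by positivity
    have hinner : HasDerivAt (fun y => k * ((Real.exp y - 1)/(Real.exp y + 1)))
        (k * ((Real.exp y * (Real.exp y+1) - (Real.exp y - 1)*Real.exp y)/(Real.exp y+1)^2)) y :=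
      ((hu.sub_const 1).div (hu.add_const 1) hden).const_mul k
    have := ((Real.hasDerivAt_arctan _).comp y hinner).const_mul (2/c)
    refine this.congr_deriv (Eq.symm ?_)
    rw [GR3513_cosh_form h1]
    set u := Real.exp y
    have hu0 : 0 < u := Real.exp_pos y
    have hq : 0 < u^2 + 2*α*u + 1 := by nlinarith [sq_nonneg (u-1)]
    have hp : 0 < 1 + (k * ((u-1)/(u+1)))^2 := by positivity
    have hk0 : k ≠ 0 := by intro h0; rw [h0, zero_mul] at hck; linarith
    have key : 1 + (k*((u-1)/(u+1)))^2 = 2*(u^2+2*α*u+1)/((1+α)*(u+1)^2) := by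
      rw [mul_pow, div_pow]
      field_simp
      linear_combination (u-1)^2 * hk2
    rw [key, ← hck]
    have := hq.ne'
    field_simp
    ring
  have htt : Tendsto (fun y : ℝ => (Real.exp y - 1)/(Real.exp y + 1)) atTop (𝓝 1) := by
    have h0 : Tendsto (fun y : ℝ => 2/(Real.exp y + 1)) atTop (𝓝 0) :=
      Tendsto.div_atTop tendsto_const_nhds
        (tendsto_atTop_add_const_right atTop 1 Real.tendsto_exp_atTop)
    have heq : ∀ y : ℝ, (Real.exp y - 1)/(Real.exp y + 1) = 1 - 2/(Real.exp y + 1) := by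
      intro y
      have h : Real.exp y + 1 ≠ 0 := by positivity
      field_simp
      ring
    simpa using tendsto_const_nhds.sub h0 |>.congr (fun y => (heq y).symm)
  have htop : Tendsto F atTop (𝓝 (2/c * Real.arctan k)) := by
    have h1t : Tendsto (fun y : ℝ => k * ((Real.exp y - 1)/(Real.exp y + 1))) atTop (𝓝 (k*1)) :=
      tendsto_const_nhds.mul htt
    have h2t := ((Real.continuous_arctan.tendsto (k*1)).comp h1t).const_mul (2/c)
    simpa [Function.comp] using h2t
  have hbot : Tendsto F atBot (𝓝 (2/c * Real.arctan (-k))) := by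
    have hca : ContinuousAt (fun x : ℝ => 2/c * Real.arctan (k * ((x - 1)/(x + 1)))) 0 := by
      have hd : ContinuousAt (fun x : ℝ => (x-1)/(x+1)) 0 :=
        ContinuousAt.div (by fun_prop) (by fun_prop) (by norm_num)
      exact continuousAt_const.mul
        (Real.continuous_arctan.continuousAt.comp (continuousAt_const.mul hd))
    have h3t := hca.tendsto.comp Real.tendsto_exp_atBot
    simp only [Function.comp_def] at h3t
    convert h3t using 2
    norm_num
  rw [MeasureTheory.integral_of_hasDerivAt_of_tendsto hderiv (GR3513_intble h1) hbot htop,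
    Real.arctan_neg]
  ring

lemma GR3513_case2 : ∫ y : ℝ, 1 / (Real.cosh y + 1) = 2 := by
  set F : ℝ → ℝ := fun y => (Real.exp y - 1)/(Real.exp y + 1) with hFdef
  have hderiv : ∀ y, HasDerivAt F (1 / (Real.cosh y + 1)) y := by
    intro y
    have hu := Real.hasDerivAt_exp y
    have hden : Real.exp y + 1 ≠ 0 := by positivity
    have h := (hu.sub_const 1).div (hu.add_const 1) hden
    refine h.congr_deriv (Eq.symm ?_)
    rw [GR3513_cosh_form (by norm_num)]
    have hu0 := Real.exp_pos y
    have h2 : (Real.exp y)^2 + 2*1*Real.exp y + 1 = (Real.exp y + 1)^2 := by ring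
    rw [h2]
    field_simp
    ring
  have htt : Tendsto F atTop (𝓝 1) := by
    have h0 : Tendsto (fun y : ℝ => 2/(Real.exp y + 1)) atTop (𝓝 0) :=
      Tendsto.div_atTop tendsto_const_nhds
        (tendsto_atTop_add_const_right atTop 1 Real.tendsto_exp_atTop)
    have heq : ∀ y : ℝ, F y = 1 - 2/(Real.exp y + 1) := by
      intro y
      have h : Real.exp y + 1 ≠ 0 := by positivity
      rw [hFdef]
      field_simp
      ring
    simpa using tendsto_const_nhds.sub h0 |>.congr (fun y => (heq y).symm)
  have hbot : Tendsto F atBot (𝓝 (-1)) := by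
    have hca : ContinuousAt (fun x : ℝ => (x - 1)/(x + 1)) 0 :=
      ContinuousAt.div (by fun_prop) (by fun_prop) (by norm_num)
    have h3t := hca.tendsto.comp Real.tendsto_exp_atBot
    simp only [Function.comp_def] at h3t
    convert h3t using 2
    norm_num
  rw [MeasureTheory.integral_of_hasDerivAt_of_tendsto hderiv (GR3513_intble (by norm_num)) hbot htt]
  norm_num

lemma GR3513_case3 {α : ℝ} (h2 : 1 < α) :
    ∫ y : ℝ, 1 / (Real.cosh y + α) =
      2 / Real.sqrt (α^2 - 1) * Real.log (α + Real.sqrt (α^2 - 1)) := by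
  have h1 : (-1:ℝ) < α := by linarith
  set c := Real.sqrt (α^2 - 1) with hcdef
  have hc : 0 < c := Real.sqrt_pos.mpr (by nlinarith)
  have hcsq : c^2 = α^2 - 1 := Real.sq_sqrt (by nlinarith)
  have hclt : c < α := by nlinarith
  have hac : 0 < α - c := by linarith
  have hac2 : 0 < α + c := by linarith
  have hmul : (α - c) * (α + c) = 1 := by nlinarith
  set F : ℝ → ℝ := fun y => 1/c * Real.log ((Real.exp y + (α - c))/(Real.exp y + (α + c))) with hFdef
  have hderiv : ∀ y, HasDerivAt F (1 / (Real.cosh y + α)) y := by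
    intro y
    have hu := Real.hasDerivAt_exp y
    have hu0 := Real.exp_pos y
    have hnum : (0:ℝ) < Real.exp y + (α - c) := by linarith
    have hden : (0:ℝ) < Real.exp y + (α + c) := by linarith
    have hr : HasDerivAt (fun y => (Real.exp y + (α - c))/(Real.exp y + (α + c)))
        ((Real.exp y * (Real.exp y + (α + c)) - (Real.exp y + (α - c)) * Real.exp y)
          / (Real.exp y + (α + c))^2) y :=
      (hu.add_const (α - c)).div (hu.add_const (α + c)) hden.ne'
    have hr0 : (Real.exp y + (α - c))/(Real.exp y + (α + c)) ≠ 0 :=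
      (div_pos hnum hden).ne'
    have h := ((Real.hasDerivAt_log hr0).comp y hr).const_mul (1/c)
    refine h.congr_deriv (Eq.symm ?_)
    rw [GR3513_cosh_form h1]
    have hfac : (Real.exp y)^2 + 2*α*Real.exp y + 1
        = (Real.exp y + (α - c)) * (Real.exp y + (α + c)) := by linear_combination hcsq
    rw [hfac]
    field_simp
    ring
  have htop : Tendsto F atTop (𝓝 0) := by
    have h0 : Tendsto (fun y : ℝ => (2*c)/(Real.exp y + (α + c))) atTop (𝓝 0) :=
      Tendsto.div_atTop tendsto_const_nhds
        (tendsto_atTop_add_const_right atTop (α + c) Real.tendsto_exp_atTop)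
    have htt : Tendsto (fun y : ℝ => (Real.exp y + (α - c))/(Real.exp y + (α + c)))
        atTop (𝓝 1) := by
      have heq : ∀ y : ℝ, (Real.exp y + (α - c))/(Real.exp y + (α + c))
          = 1 - (2*c)/(Real.exp y + (α + c)) := by
        intro y
        have hden : (0:ℝ) < Real.exp y + (α + c) := by positivity
        field_simp
        ring
      simpa using tendsto_const_nhds.sub h0 |>.congr (fun y => (heq y).symm)
    have := ((Real.continuousAt_log one_ne_zero).tendsto.comp htt).const_mul (1/c)
    simpa [hFdef, Function.comp, one_div] using this
  have hbot : Tendsto F atBot (𝓝 (1/c * Real.log ((α - c)/(α + c)))) := by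
    have hca : ContinuousAt (fun x : ℝ => 1/c * Real.log ((x + (α - c))/(x + (α + c)))) 0 := by
      apply ContinuousAt.mul continuousAt_const
      apply ContinuousAt.log
      · exact ContinuousAt.div (by fun_prop) (by fun_prop) (by positivity)
      · positivity
    have h3t := hca.tendsto.comp Real.tendsto_exp_atBot
    simp only [Function.comp_def] at h3t
    convert h3t using 2
    norm_num
  rw [MeasureTheory.integral_of_hasDerivAt_of_tendsto hderiv (GR3513_intble h1) hbot htop]
  have hinv : α - c = (α + c)⁻¹ := by
    field_simp
    linarith [hmul]
  rw [Real.log_div hac.ne' hac2.ne', hinv, Real.log_inv]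
  ring

end GR3513aux

/-- Gradshteyn–Ryzhik 3.513.2: for `α > -1`, the integral `∫_ℝ dy/(cosh y + α)`
converges and has the stated closed form in each of the three regimes. -/
theorem stmt_0 (α : ℝ) (hα : -1 < α) :
    Integrable (fun y : ℝ => 1 / (Real.cosh y + α)) ∧
    (|α| < 1 →
      (∫ y : ℝ, 1 / (Real.cosh y + α)) =
        4 / Real.sqrt (1 - α ^ 2) * Real.arctan (Real.sqrt ((1 - α) / (1 + α)))) ∧
    (α = 1 → (∫ y : ℝ, 1 / (Real.cosh y + α)) = 2) ∧
    (1 < α →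
      (∫ y : ℝ, 1 / (Real.cosh y + α)) =
        2 / Real.sqrt (α ^ 2 - 1) * Real.log (α + Real.sqrt (α ^ 2 - 1))) := by
  refine ⟨GR3513_intble hα, ?_, ?_, ?_⟩
  · intro h
    rw [abs_lt] at h
    exact GR3513_case1 h.1 h.2
  · rintro rfl
    exact GR3513_case2
  · intro h
    exact GR3513_case3 h
end

section
/- Fix b ∈ ℝ, set γ = 1 + (16/3)b, and when γ ≤ 0 set s_* = √(−γ/(1−γ)). Let ω > 0 and let c satisfy −2√ω < c < 2√ω if γ > 0, or −2√ω < c < −2 s_* √ω if γ ≤ 0. Then c² + γ(4ω − c²) > 0, the expression √(c² + γ(4ω − c²))·cosh(√(4ω − c²)·x) − c is strictly positive for every x ∈ ℝ, and the function Φ(x) = ( 2(4ω − c²) / ( √(c² + γ(4ω − c²))·cosh(√(4ω − c²)·x) − c ) )^{1/2} is a smooth, strictly positive, even function on ℝ, tends to 0 as |x| → ∞, and satisfies the ordinary differential equation −Φ''(x) + (ω − c²/4)·Φ(x) + (c/2)·Φ(x)³ − (3/16)·γ·Φ(x)⁵ = 0 for all x ∈ ℝ. -/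
open MeasureTheory Real Filter

/-- The (bright) soliton profile of the derivative NLS after gauge transformation. -/
noncomputable def PhiB (γ ω c x : ℝ) : ℝ :=
  Real.sqrt (2 * (4 * ω - c ^ 2) /
    (Real.sqrt (c ^ 2 + γ * (4 * ω - c ^ 2)) * Real.cosh (Real.sqrt (4 * ω - c ^ 2) * x) - c))

private lemma soliton_alg (c γ k A C d s si co ω : ℝ)
    (h1 : s ^ 2 * d = 1) (hC2 : C ^ 2 = 2 * k ^ 2) (hA2 : A ^ 2 = c ^ 2 + γ * k ^ 2)
    (h4 : A * co = d + c) (h5 : co ^ 2 - si ^ 2 = 1) (hω : ω = (k ^ 2 + c ^ 2) / 4) :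
    -(C * (A*k*(co*k) * (-(1/2)) * s^3 + A*k*si * (-(1/2)) * (A*k*si * (-(1/2)-1) * s^5)))
      + (ω - c ^ 2 / 4) * (C * s) + c / 2 * (C * s) ^ 3 - 3 / 16 * γ * (C * s) ^ 5 = 0 := by
  linear_combination (C*s) * hω
    + (C*k^2*s*(-(3/4)*(s^2*d+1) - (3/2)*c*s^2 + 1/2)) * h1
    + ((c/2)*s^3*C - (3/16)*γ*s^5*C*(C^2+2*k^2)) * hC2
    + ((3/4)*C*s^5*k^2) * hA2
    + (-(3/4)*C*s^5*k^2*(A*co + d + c) + (1/2)*C*s^3*k^2) * h4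
    + ((3/4)*C*s^5*k^2*A^2) * h5

/-- Existence/verification of the soliton profile: under the stated parameter conditions
the explicit profile is smooth, positive, even, vanishes at infinity and solves
`-Φ'' + (ω - c²/4)Φ + (c/2)Φ³ - (3/16)γΦ⁵ = 0`. -/
theorem stmt_2 (b γ ω c : ℝ) (hγ : γ = 1 + 16 / 3 * b) (hω : 0 < ω)
    (hc1 : 0 < γ → -2 * Real.sqrt ω < c ∧ c < 2 * Real.sqrt ω)
    (hc2 : γ ≤ 0 → -2 * Real.sqrt ω < c ∧
      c < -2 * Real.sqrt (-γ / (1 - γ)) * Real.sqrt ω) :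
    0 < c ^ 2 + γ * (4 * ω - c ^ 2) ∧
    (∀ x : ℝ, 0 < Real.sqrt (c ^ 2 + γ * (4 * ω - c ^ 2)) *
        Real.cosh (Real.sqrt (4 * ω - c ^ 2) * x) - c) ∧
    ContDiff ℝ (⊤ : ℕ∞) (fun x => PhiB γ ω c x) ∧
    (∀ x : ℝ, 0 < PhiB γ ω c x) ∧
    (∀ x : ℝ, PhiB γ ω c (-x) = PhiB γ ω c x) ∧
    Tendsto (fun x => PhiB γ ω c x) (cocompact ℝ) (nhds 0) ∧
    (∀ x : ℝ, -deriv (deriv (fun y => PhiB γ ω c y)) x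
        + (ω - c ^ 2 / 4) * PhiB γ ω c x
        + c / 2 * PhiB γ ω c x ^ 3 - 3 / 16 * γ * PhiB γ ω c x ^ 5 = 0) := by
  clear hγ
  have hsω : Real.sqrt ω ^ 2 = ω := Real.sq_sqrt hω.le
  have hsωnn : 0 ≤ Real.sqrt ω := Real.sqrt_nonneg ω
  -- in the case γ ≤ 0, c is negative
  have hcneg : γ ≤ 0 → c < 0 := by
    intro hγ0
    have h2 := (hc2 hγ0).2
    have hs : 0 ≤ Real.sqrt (-γ / (1 - γ)) := Real.sqrt_nonneg _
    nlinarith [mul_nonneg hs hsωnn]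
  -- 4ω - c² > 0
  have hK : 0 < 4 * ω - c ^ 2 := by
    rcases le_or_gt γ 0 with hγ0 | hγ0
    · obtain ⟨h1, _⟩ := hc2 hγ0
      have hc0 := hcneg hγ0
      nlinarith [mul_pos (show (0:ℝ) < 2 * Real.sqrt ω + c by linarith)
        (show (0:ℝ) < -c by linarith)]
    · obtain ⟨h1, h2⟩ := hc1 hγ0
      nlinarith [mul_pos (show (0:ℝ) < 2 * Real.sqrt ω - c by linarith)
        (show (0:ℝ) < 2 * Real.sqrt ω + c by linarith)]
  -- c² + γ(4ω - c²) > 0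
  have hA2pos : 0 < c ^ 2 + γ * (4 * ω - c ^ 2) := by
    rcases le_or_gt γ 0 with hγ0 | hγ0
    · obtain ⟨h1, h2⟩ := hc2 hγ0
      have h1γ : (0:ℝ) < 1 - γ := by linarith
      have hsq : Real.sqrt (-γ / (1 - γ)) ^ 2 = -γ / (1 - γ) :=
        Real.sq_sqrt (div_nonneg (by linarith) (by linarith))
      have hsq' : Real.sqrt (-γ / (1 - γ)) ^ 2 * (1 - γ) = -γ := by
        rw [hsq]; field_simp
      have hs : 0 ≤ Real.sqrt (-γ / (1 - γ)) := Real.sqrt_nonneg _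
      have hst : 0 ≤ 2 * Real.sqrt (-γ / (1 - γ)) * Real.sqrt ω := by positivity
      have hcsq : (2 * Real.sqrt (-γ / (1 - γ)) * Real.sqrt ω) ^ 2 < c ^ 2 := by
        nlinarith [mul_pos (show (0:ℝ) < -c - 2 * Real.sqrt (-γ / (1 - γ)) * Real.sqrt ω
          by linarith) (show (0:ℝ) < -c + 2 * Real.sqrt (-γ / (1 - γ)) * Real.sqrt ω
          by linarith)]
      have h6 : (2 * Real.sqrt (-γ / (1 - γ)) * Real.sqrt ω) ^ 2 * (1 - γ)
          = 4 * (-γ) * ω := by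
        linear_combination 4 * (Real.sqrt ω) ^ 2 * hsq' + (-(4:ℝ)) * γ * hsω
      nlinarith [mul_lt_mul_of_pos_right hcsq h1γ]
    · have hγK : 0 < γ * (4 * ω - c ^ 2) := mul_pos hγ0 hK
      nlinarith [sq_nonneg c]
  set k := Real.sqrt (4 * ω - c ^ 2) with hk
  set A := Real.sqrt (c ^ 2 + γ * (4 * ω - c ^ 2)) with hA
  have hk2 : k ^ 2 = 4 * ω - c ^ 2 := Real.sq_sqrt hK.le
  have hkpos : 0 < k := Real.sqrt_pos.mpr hK
  have hApos : 0 < A := Real.sqrt_pos.mpr hA2pos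
  have hA2 : A ^ 2 = c ^ 2 + γ * (4 * ω - c ^ 2) := Real.sq_sqrt hA2pos.le
  -- A > c
  have hAc : c < A := by
    rcases le_or_gt c 0 with hc0 | hc0
    · exact lt_of_le_of_lt hc0 hApos
    · have hγ0 : 0 < γ := by
        by_contra h
        exact absurd hc0 (not_lt.mpr (hcneg (not_lt.mp h)).le)
      nlinarith [mul_pos hγ0 hK]
  -- denominator positivity
  have hD : ∀ x : ℝ, 0 < A * Real.cosh (k * x) - c := by
    intro x
    have h1 := Real.one_le_cosh (k * x)
    nlinarith
  set C := Real.sqrt (2 * (4 * ω - c ^ 2)) with hC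
  have hCpos : 0 < C := Real.sqrt_pos.mpr (by linarith)
  have hC2 : C ^ 2 = 2 * (4 * ω - c ^ 2) := Real.sq_sqrt (by linarith)
  set D : ℝ → ℝ := fun x => A * Real.cosh (k * x) - c with hDdef
  have hDpos : ∀ x, 0 < D x := fun x => hD x
  -- the profile as a power
  have hPhieq : ∀ x, PhiB γ ω c x = C * D x ^ (-(1/2) : ℝ) := by
    intro x
    have hDx : (0:ℝ) < A * Real.cosh (k * x) - c := hD x
    simp only [PhiB, hDdef]
    rw [← hk, ← hA]
    rw [Real.sqrt_div (by linarith : (0:ℝ) ≤ 2 * (4 * ω - c ^ 2)), ← hC, div_eq_mul_inv]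
    congr 1
    rw [Real.rpow_neg hDx.le, Real.sqrt_eq_rpow]
  -- smoothness
  have hDsm : ContDiff ℝ (⊤ : ℕ∞) D := by
    rw [hDdef]
    exact (contDiff_const.mul (Real.contDiff_cosh.comp
      (contDiff_const.mul contDiff_id))).sub contDiff_const
  have hsm : ContDiff ℝ (⊤ : ℕ∞) (fun x => PhiB γ ω c x) := by
    have heq : (fun x => PhiB γ ω c x) = fun x => C * D x ^ (-(1/2) : ℝ) := funext hPhieq
    rw [heq]
    refine contDiff_iff_contDiffAt.mpr fun x => contDiffAt_const.mul ?_
    exact (Real.contDiffAt_rpow_const_of_ne (hDpos x).ne').comp x hDsm.contDiffAt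
  -- positivity
  have hpos : ∀ x, 0 < PhiB γ ω c x := by
    intro x
    rw [hPhieq x]
    have := hDpos x
    positivity
  -- evenness
  have heven : ∀ x, PhiB γ ω c (-x) = PhiB γ ω c x := by
    intro x
    simp only [PhiB, mul_neg, Real.cosh_neg]
  -- decay
  have hcoshTop : Tendsto Real.cosh atTop atTop := by
    apply tendsto_atTop_mono (fun x => ?_) (Real.tendsto_exp_atTop.atTop_div_const two_pos)
    rw [Real.cosh_eq]
    have := Real.exp_pos (-x)
    linarith
  have hcoshBot : Tendsto Real.cosh atBot atTop := by
    have h := hcoshTop.comp tendsto_neg_atBot_atTop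
    refine h.congr fun x => ?_
    simp [Function.comp, Real.cosh_neg]
  have hDtop : Tendsto D (cocompact ℝ) atTop := by
    rw [cocompact_eq_atBot_atTop, tendsto_sup]
    constructor
    · have h1 : Tendsto (fun x : ℝ => k * x) atBot atBot :=
        (tendsto_id (α := ℝ)).const_mul_atBot hkpos
      have h2 : Tendsto (fun x : ℝ => Real.cosh (k * x)) atBot atTop := hcoshBot.comp h1
      have h3 : Tendsto (fun x : ℝ => A * Real.cosh (k * x)) atBot atTop :=
        h2.const_mul_atTop hApos
      simpa [hDdef, sub_eq_add_neg] using tendsto_atTop_add_const_right atBot (-c) h3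
    · have h1 : Tendsto (fun x : ℝ => k * x) atTop atTop :=
        (tendsto_id (α := ℝ)).const_mul_atTop hkpos
      have h2 : Tendsto (fun x : ℝ => Real.cosh (k * x)) atTop atTop := hcoshTop.comp h1
      have h3 : Tendsto (fun x : ℝ => A * Real.cosh (k * x)) atTop atTop :=
        h2.const_mul_atTop hApos
      simpa [hDdef, sub_eq_add_neg] using tendsto_atTop_add_const_right atTop (-c) h3
  have hdecay : Tendsto (fun x => PhiB γ ω c x) (cocompact ℝ) (nhds 0) := by
    have h0 : Tendsto (fun x => C * D x ^ (-(1/2) : ℝ)) (cocompact ℝ) (nhds (C * 0)) :=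
      (((tendsto_rpow_neg_atTop (by norm_num : (0:ℝ) < 1/2)).comp hDtop)).const_mul C
    rw [mul_zero] at h0
    exact h0.congr fun x => (hPhieq x).symm
  -- derivatives
  have hDdiff : ∀ x : ℝ, HasDerivAt D (A * k * Real.sinh (k * x)) x := by
    intro x
    have h1 : HasDerivAt (fun y : ℝ => k * y) k x := by
      simpa using (hasDerivAt_id x).const_mul k
    have h2 : HasDerivAt (fun y : ℝ => Real.cosh (k * y)) (Real.sinh (k * x) * k) x :=
      (Real.hasDerivAt_cosh (k * x)).comp x h1
    have h3 := (h2.const_mul A).sub_const c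
    convert h3 using 1
    · rfl
    · rfl
    · ring
  have hP1 : ∀ x : ℝ, HasDerivAt (fun y => PhiB γ ω c y)
      (C * (A * k * Real.sinh (k * x) * (-(1/2)) * D x ^ (-(1/2) - 1 : ℝ))) x := by
    intro x
    have h := ((hDdiff x).rpow_const (p := (-(1/2) : ℝ)) (Or.inl (hDpos x).ne')).const_mul C
    exact h.congr_of_eventuallyEq (Filter.Eventually.of_forall fun y => hPhieq y)
  have hd1 : deriv (fun y => PhiB γ ω c y) =
      fun x => C * (A * k * Real.sinh (k * x) * (-(1/2)) * D x ^ (-(1/2) - 1 : ℝ)) :=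
    funext fun x => (hP1 x).deriv
  have hP2 : ∀ x : ℝ, HasDerivAt
      (fun y => C * (A * k * Real.sinh (k * y) * (-(1/2)) * D y ^ (-(1/2) - 1 : ℝ)))
      (C * (A * k * (Real.cosh (k * x) * k) * (-(1/2)) * D x ^ (-(1/2) - 1 : ℝ)
        + A * k * Real.sinh (k * x) * (-(1/2)) *
          (A * k * Real.sinh (k * x) * (-(1/2) - 1) * D x ^ (-(1/2) - 1 - 1 : ℝ)))) x := by
    intro x
    have h1 : HasDerivAt (fun y : ℝ => k * y) k x := by
      simpa using (hasDerivAt_id x).const_mul k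
    have hg : HasDerivAt (fun y : ℝ => A * k * Real.sinh (k * y))
        (A * k * (Real.cosh (k * x) * k)) x :=
      ((Real.hasDerivAt_sinh (k * x)).comp x h1).const_mul (A * k)
    have hh : HasDerivAt (fun y => D y ^ (-(1/2) - 1 : ℝ))
        (A * k * Real.sinh (k * x) * (-(1/2) - 1) * D x ^ (-(1/2) - 1 - 1 : ℝ)) x :=
      (hDdiff x).rpow_const (Or.inl (hDpos x).ne')
    exact ((hg.mul_const (-(1/2))).mul hh).const_mul C
  -- the ODE
  have hode : ∀ x : ℝ, -deriv (deriv (fun y => PhiB γ ω c y)) x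
      + (ω - c ^ 2 / 4) * PhiB γ ω c x
      + c / 2 * PhiB γ ω c x ^ 3 - 3 / 16 * γ * PhiB γ ω c x ^ 5 = 0 := by
    intro x
    rw [hd1, (hP2 x).deriv, hPhieq x]
    set s := D x ^ (-(1/2) : ℝ) with hs
    have key : ∀ (p : ℝ) (n : ℕ), p = -(1/2) * (n : ℝ) → D x ^ p = s ^ n := by
      intro p n hp
      rw [hp, Real.rpow_mul (hDpos x).le, ← hs, Real.rpow_natCast]
    have e3 : D x ^ (-(1/2) - 1 : ℝ) = s ^ 3 := key _ 3 (by norm_num)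
    have e5 : D x ^ (-(1/2) - 1 - 1 : ℝ) = s ^ 5 := key _ 5 (by norm_num)
    have h1 : s ^ 2 * D x = 1 := by
      have h2 : s ^ 2 = D x ^ (-(1:ℝ)) := (key _ 2 (by norm_num)).symm
      rw [h2, Real.rpow_neg_one, inv_mul_cancel₀ (hDpos x).ne']
    have hC2' : C ^ 2 = 2 * k ^ 2 := by rw [hC2, hk2]
    have hA2' : A ^ 2 = c ^ 2 + γ * k ^ 2 := by rw [hA2, hk2]
    have h4 : A * Real.cosh (k * x) = D x + c := by simp only [hDdef]; ring
    have h5 := Real.cosh_sq_sub_sinh_sq (k * x)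
    have hωeq : ω = (k ^ 2 + c ^ 2) / 4 := by rw [hk2]; ring
    rw [e3, e5]
    exact soliton_alg c γ k A C (D x) s (Real.sinh (k * x)) (Real.cosh (k * x)) ω
      h1 hC2' hA2' h4 h5 hωeq
  exact ⟨hA2pos, hD, hsm, hpos, heven, hdecay, hode⟩
end

section
/- Fix b > −3/16 and set γ = 1 + (16/3)b (so γ > 0), and let ω > 0. If −2√ω < c < 2√ω, then ∫_ℝ Φ_{ω,c}(x)² dx = (8/√γ)·arctan(√((1+β)/(1−β))), where β = c/√(c² + γ(4ω − c²)). If c = 2√ω, then ∫_ℝ Φ_{ω,c}(x)² dx = 4π/√γ. -/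
open MeasureTheory Real
open Filter Set Topology

/-- The algebraic soliton profile. -/
noncomputable def PhiA (γ c x : ℝ) : ℝ :=
  Real.sqrt (4 * c / ((c * x) ^ 2 + γ))

lemma tanh_tendsto_atTop : Tendsto (fun y : ℝ => Real.sinh y / Real.cosh y) atTop (𝓝 1) := by
  have h : ∀ y : ℝ, Real.sinh y / Real.cosh y = (1 - Real.exp (-(2*y))) / (1 + Real.exp (-(2*y))) := by
    intro y
    rw [Real.sinh_eq, Real.cosh_eq]
    have h1 : Real.exp (-(2*y)) = Real.exp (-y) * Real.exp (-y) := by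
      rw [← Real.exp_add]; ring_nf
    have h2 : Real.exp y * Real.exp (-y) = 1 := by rw [← Real.exp_add]; simp
    have h3 : 0 < Real.exp y + Real.exp (-y) := by positivity
    have h4 : 0 < (1:ℝ) + Real.exp (-(2*y)) := by positivity
    field_simp
    have h1' : Real.exp (-(y*2)) = Real.exp (-y) * Real.exp (-y) := by
      rw [← Real.exp_add]; ring_nf
    linear_combination 2 * Real.exp y * h1' + 2 * Real.exp (-y) * h2
  simp_rw [h]
  have he : Tendsto (fun y : ℝ => Real.exp (-(2*y))) atTop (𝓝 0) := by
    have h2t : Tendsto (fun y:ℝ => 2*y) atTop atTop := Tendsto.const_mul_atTop two_pos tendsto_id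
    exact Real.tendsto_exp_neg_atTop_nhds_zero.comp h2t
  have := ((tendsto_const_nhds (x := (1:ℝ))).sub he).div ((tendsto_const_nhds (x := (1:ℝ))).add he) (by norm_num)
  simp at this; exact this

lemma cosh_integral (A c k G : ℝ) (hk : 0 < k) (hG : 0 < G) (hcA : c < A) (hcA' : -A < c)
    (hD : A ^ 2 - c ^ 2 = G ^ 2 * k ^ 2) :
    ∫ x : ℝ, 2 * k ^ 2 / (A * Real.cosh (k * x) - c)
      = 8 / G * Real.arctan (Real.sqrt ((A + c) / (A - c))) := by
  have hAc0 : 0 < A - c := by linarith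
  have hAc0' : 0 < A + c := by linarith
  have hA0 : 0 < A := by linarith
  set l : ℝ := Real.sqrt ((A + c) / (A - c)) with hl
  have hl0 : 0 < l := Real.sqrt_pos.2 (div_pos hAc0' hAc0)
  have hl2 : l ^ 2 = (A + c) / (A - c) := Real.sq_sqrt (le_of_lt (div_pos hAc0' hAc0))
  have hl4 : l ^ 2 * (A - c) = A + c := by rw [hl2]; field_simp
  have hl1 : l * (A - c) = G * k := by
    have e1 : l * (A - c) = Real.sqrt ((A + c) / (A - c) * (A - c) ^ 2) := by
      rw [Real.sqrt_mul (le_of_lt (div_pos hAc0' hAc0)), Real.sqrt_sq hAc0.le]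
    rw [e1, show (A + c) / (A - c) * (A - c) ^ 2 = (G * k) ^ 2 by
      field_simp; linear_combination hD, Real.sqrt_sq (by positivity)]
  set f : ℝ → ℝ := fun x => 2 * k ^ 2 / (A * Real.cosh (k * x) - c) with hfdef
  have hden : ∀ x : ℝ, 0 < A * Real.cosh (k * x) - c := by
    intro x
    nlinarith [Real.one_le_cosh (k * x)]
  have hfpos : ∀ x : ℝ, 0 < f x := by
    intro x
    exact div_pos (by positivity) (hden x)
  set g : ℝ → ℝ := fun x => 4 / G * Real.arctan (l * (Real.sinh (k * x / 2) / Real.cosh (k * x / 2)))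
    with hgdef
  have hderiv : ∀ x : ℝ, HasDerivAt g (f x) x := by
    intro x
    have hch : 0 < Real.cosh (k * x / 2) := Real.cosh_pos _
    have h1 : HasDerivAt (fun x : ℝ => k * x / 2) (k / 2) x := by
      simpa using ((hasDerivAt_id x).const_mul k).div_const 2
    have h2 : HasDerivAt (fun y : ℝ => Real.sinh y / Real.cosh y)
        (1 / Real.cosh (k * x / 2) ^ 2) (k * x / 2) := by
      have h := (Real.hasDerivAt_sinh (k * x / 2)).div (Real.hasDerivAt_cosh (k * x / 2))
        (ne_of_gt hch)
      refine h.congr_deriv ?_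
      have hpy := Real.cosh_sq_sub_sinh_sq (k * x / 2)
      rw [← hpy]
      ring
    have h3 := h2.comp x h1
    have h4 := h3.const_mul l
    have h5 := (Real.hasDerivAt_arctan
      (l * (Real.sinh (k * x / 2) / Real.cosh (k * x / 2)))).comp x h4
    have h6 := h5.const_mul (4 / G)
    refine h6.congr_deriv ?_
    symm
    set s := Real.sinh (k * x / 2)
    set ch := Real.cosh (k * x / 2)
    have hpy : ch ^ 2 - s ^ 2 = 1 := Real.cosh_sq_sub_sinh_sq (k * x / 2)
    have hcosh2 : Real.cosh (k * x) = ch ^ 2 + s ^ 2 := by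
      rw [show k * x = 2 * (k * x / 2) by ring, Real.cosh_two_mul]
    have hquad : 0 < 1 + (l * (s / ch)) ^ 2 := by positivity
    have hd1 : A * (ch ^ 2 + s ^ 2) - c ≠ 0 := by
      have h0 := hden x
      rw [hcosh2] at h0
      exact ne_of_gt h0
    have hch' : ch ≠ 0 := ne_of_gt hch
    have hq' : (1:ℝ) + (l * (s / ch)) ^ 2 ≠ 0 := ne_of_gt hquad
    rw [hfdef]
    simp only
    rw [hcosh2]
    field_simp
    linear_combination (-4*(ch^2 + s^2*l^2)) * hl1 + (4*l*s^2) * hl4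
      - (4*l*c) * hpy
  have hg0 : g 0 = 0 := by simp [hgdef]
  have htop : Tendsto g atTop (𝓝 (4 / G * Real.arctan l)) := by
    have h2t : Tendsto (fun x : ℝ => k * x / 2) atTop atTop :=
      (Tendsto.const_mul_atTop hk tendsto_id).atTop_div_const two_pos
    have h3t := tanh_tendsto_atTop.comp h2t
    have h4t : Tendsto (fun x : ℝ => l * (Real.sinh (k * x / 2) / Real.cosh (k * x / 2)))
        atTop (𝓝 l) := by
      have := h3t.const_mul l
      simpa [Function.comp] using this
    have h5t := (Real.continuous_arctan.tendsto l).comp h4t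
    have := h5t.const_mul (4 / G)
    simpa [Function.comp] using this
  have hint : IntegrableOn f (Ioi 0) :=
    integrableOn_Ioi_deriv_of_nonneg' (fun x _ => hderiv x) (fun x _ => (hfpos x).le) htop
  have hIoi : ∫ x in Ioi (0:ℝ), f x = 4 / G * Real.arctan l - g 0 :=
    integral_Ioi_of_hasDerivAt_of_nonneg' (fun x _ => hderiv x) (fun x _ => (hfpos x).le) htop
  have hfe : ∀ x : ℝ, f (-x) = f x := by
    intro x
    simp [hfdef, mul_neg, Real.cosh_neg]
  have hIci : IntegrableOn f (Ici 0) := (integrableOn_Ici_iff_integrableOn_Ioi (f := f)).2 hint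
  have hIic_int : IntegrableOn f (Iic 0) := by
    have h2 := (MeasurePreserving.integrableOn_comp_preimage
      (Measure.measurePreserving_neg (volume : Measure ℝ))
      (Homeomorph.neg ℝ).measurableEmbedding).2 hIci
    have hpre : (fun x : ℝ => -x) ⁻¹' (Ici 0) = Iic 0 := by ext y; simp
    have hfn : (f ∘ fun x : ℝ => -x) = f := funext hfe
    rw [show (Neg.neg : ℝ → ℝ) = fun x : ℝ => -x from rfl] at h2
    rwa [hpre, hfn] at h2
  have hIic_val : ∫ x in Iic (0:ℝ), f x = ∫ x in Ioi (0:ℝ), f x := by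
    have : ∫ x in Iic (0:ℝ), f x = ∫ x in Iic (0:ℝ), f (-x) := by
      refine setIntegral_congr_fun measurableSet_Iic fun y _ => ?_
      exact (hfe y).symm
    rw [this, integral_comp_neg_Iic, neg_zero]
  have htotal := intervalIntegral.integral_Iic_add_Ioi hIic_int hint
  rw [show (∫ x : ℝ, 2 * k ^ 2 / (A * Real.cosh (k * x) - c)) = ∫ x : ℝ, f x from rfl,
    ← htotal, hIic_val, hIoi, hg0]
  ring

lemma alg_integral (γ c : ℝ) (hγ0 : 0 < γ) (hc0 : 0 < c) :
    ∫ x : ℝ, 4 * c / ((c * x) ^ 2 + γ) = 4 * Real.pi / Real.sqrt γ := by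
  have hsγ : 0 < Real.sqrt γ := Real.sqrt_pos.2 hγ0
  have hγsq : Real.sqrt γ * Real.sqrt γ = γ := Real.mul_self_sqrt hγ0.le
  have h1 : ∀ x : ℝ, 4 * c / ((c * x) ^ 2 + γ)
      = (4 * c / γ) * (1 + ((c / Real.sqrt γ) * x) ^ 2)⁻¹ := by
    intro x
    have hsq : ((c / Real.sqrt γ) * x) ^ 2 = c ^ 2 * x ^ 2 / γ := by
      rw [mul_pow, div_pow, Real.sq_sqrt hγ0.le]; ring
    rw [hsq]
    have hpos : 0 < (c * x) ^ 2 + γ := by positivity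
    field_simp
    ring
  simp_rw [h1]
  rw [integral_const_mul, Measure.integral_comp_mul_left
    (fun y => (1 + y ^ 2)⁻¹) (c / Real.sqrt γ), integral_univ_inv_one_add_sq]
  rw [abs_of_pos (by positivity), smul_eq_mul]
  field_simp
  linear_combination hγsq

/-- Mass of the solitons in the case `γ > 0`: for `-2√ω < c < 2√ω` the mass is
`(8/√γ) arctan √((1+β)/(1-β))` with `β = c/√(c² + γ(4ω - c²))`, and for `c = 2√ω`
the mass of the algebraic soliton is `4π/√γ`. -/
theorem stmt_4 (b γ ω c : ℝ) (hb : -3 / 16 < b) (hγ : γ = 1 + 16 / 3 * b) (hω : 0 < ω) :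
    ((-2 * Real.sqrt ω < c ∧ c < 2 * Real.sqrt ω) →
      (∫ x : ℝ, (PhiB γ ω c x) ^ 2) =
        8 / Real.sqrt γ * Real.arctan (Real.sqrt
          ((1 + c / Real.sqrt (c ^ 2 + γ * (4 * ω - c ^ 2))) /
            (1 - c / Real.sqrt (c ^ 2 + γ * (4 * ω - c ^ 2)))))) ∧
    (c = 2 * Real.sqrt ω →
      (∫ x : ℝ, (PhiA γ c x) ^ 2) = 4 * Real.pi / Real.sqrt γ) := by
  have hγ0 : 0 < γ := by rw [hγ]; nlinarith
  have hsγ : 0 < Real.sqrt γ := Real.sqrt_pos.2 hγ0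
  constructor
  · rintro ⟨h1, h2⟩
    have hc2 : c ^ 2 < 4 * ω := by
      have h3 : c ^ 2 < (2 * Real.sqrt ω) ^ 2 := sq_lt_sq' (by linarith) h2
      calc c ^ 2 < (2 * Real.sqrt ω) ^ 2 := h3
        _ = 4 * ω := by rw [mul_pow, Real.sq_sqrt hω.le]; norm_num
    have hk0 : 0 < Real.sqrt (4 * ω - c ^ 2) := Real.sqrt_pos.2 (by linarith)
    have hk2 : (Real.sqrt (4 * ω - c ^ 2)) ^ 2 = 4 * ω - c ^ 2 := Real.sq_sqrt (by linarith)
    have hprod : 0 < γ * (4 * ω - c ^ 2) := mul_pos hγ0 (by linarith)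
    have harg : 0 < c ^ 2 + γ * (4 * ω - c ^ 2) := by positivity
    have hA2 : (Real.sqrt (c ^ 2 + γ * (4 * ω - c ^ 2))) ^ 2 = c ^ 2 + γ * (4 * ω - c ^ 2) :=
      Real.sq_sqrt harg.le
    have hA0 : 0 ≤ Real.sqrt (c ^ 2 + γ * (4 * ω - c ^ 2)) := Real.sqrt_nonneg _
    have hcA : c < Real.sqrt (c ^ 2 + γ * (4 * ω - c ^ 2)) := by nlinarith
    have hcA' : -Real.sqrt (c ^ 2 + γ * (4 * ω - c ^ 2)) < c := by nlinarith
    have hA0' : 0 < Real.sqrt (c ^ 2 + γ * (4 * ω - c ^ 2)) := by linarith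
    have hD : (Real.sqrt (c ^ 2 + γ * (4 * ω - c ^ 2))) ^ 2 - c ^ 2
        = (Real.sqrt γ) ^ 2 * (Real.sqrt (4 * ω - c ^ 2)) ^ 2 := by
      rw [hA2, Real.sq_sqrt hγ0.le, hk2]; ring
    have hden : ∀ x : ℝ, 0 < Real.sqrt (c ^ 2 + γ * (4 * ω - c ^ 2)) *
        Real.cosh (Real.sqrt (4 * ω - c ^ 2) * x) - c := by
      intro x
      nlinarith [Real.one_le_cosh (Real.sqrt (4 * ω - c ^ 2) * x)]
    have hPhi : ∀ x : ℝ, (PhiB γ ω c x) ^ 2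
        = 2 * (Real.sqrt (4 * ω - c ^ 2)) ^ 2 / (Real.sqrt (c ^ 2 + γ * (4 * ω - c ^ 2)) *
          Real.cosh (Real.sqrt (4 * ω - c ^ 2) * x) - c) := by
      intro x
      rw [PhiB, Real.sq_sqrt (div_nonneg (by nlinarith) (hden x).le), hk2]
    have hβ : (1 + c / Real.sqrt (c ^ 2 + γ * (4 * ω - c ^ 2))) /
        (1 - c / Real.sqrt (c ^ 2 + γ * (4 * ω - c ^ 2)))
        = (Real.sqrt (c ^ 2 + γ * (4 * ω - c ^ 2)) + c) /
          (Real.sqrt (c ^ 2 + γ * (4 * ω - c ^ 2)) - c) := by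
      have hne1 : 1 - c / Real.sqrt (c ^ 2 + γ * (4 * ω - c ^ 2)) ≠ 0 :=
        ne_of_gt (by rw [sub_pos]; exact (div_lt_one hA0').2 hcA)
      have hne2 : Real.sqrt (c ^ 2 + γ * (4 * ω - c ^ 2)) - c ≠ 0 := ne_of_gt (by linarith)
      rw [div_eq_div_iff hne1 hne2]
      field_simp
    simp_rw [hPhi]
    rw [cosh_integral _ c _ (Real.sqrt γ) hk0 hsγ hcA hcA' hD, hβ]
  · intro hc
    have hc0 : 0 < c := by rw [hc]; positivity
    have hPhi : ∀ x : ℝ, (PhiA γ c x) ^ 2 = 4 * c / ((c * x) ^ 2 + γ) := by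
      intro x
      rw [PhiA, Real.sq_sqrt (by positivity)]
    simp_rw [hPhi]
    exact alg_integral γ c hγ0 hc0
end

section
/- Fix b ∈ ℝ, set γ = 1 + (16/3)b, and let ω > 0. (1) If γ = 0 (i.e. b = −3/16) and −2√ω < c < 0, then ∫_ℝ Φ_{ω,c}(x)² dx = 4√(4ω − c²)/(−c). (2) If γ < 0 (i.e. b < −3/16), setting s_* = √(−γ/(1−γ)), then for −2√ω < c < −2 s_* √ω one has ∫_ℝ Φ_{ω,c}(x)² dx = (4/√(−γ))·log(α + √(α²−1)), where α = −c/√(c² + γ(4ω − c²)). -/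
open MeasureTheory Real Set Filter Topology

lemma integrable_inv_add_cosh {A β k : ℝ} (hβ : 0 < β) (hA : 0 < A) (hk : 0 < k) :
    Integrable (fun x : ℝ => (A + β * Real.cosh (k * x))⁻¹) := by
  set f : ℝ → ℝ := fun x => (A + β * Real.cosh (k * x))⁻¹ with hf
  have hden : ∀ x : ℝ, 0 < A + β * Real.cosh (k * x) := fun x =>
    add_pos hA (mul_pos hβ (Real.cosh_pos _))
  have hcont : Continuous f := by
    apply Continuous.inv₀
    · exact continuous_const.add (continuous_const.mul ((Real.continuous_cosh).comp
        (continuous_const.mul continuous_id)))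
    · exact fun x => (hden x).ne'
  have hbound : ∀ x : ℝ, ‖f x‖ ≤ 2 / β * Real.exp (-k * x) := by
    intro x
    have h1 : Real.exp (k * x) / 2 ≤ Real.cosh (k * x) := by
      rw [Real.cosh_eq]
      have := (Real.exp_pos (-(k * x))).le
      linarith
    have h2 : β * (Real.exp (k * x) / 2) ≤ A + β * Real.cosh (k * x) := by
      nlinarith [mul_le_mul_of_nonneg_left h1 hβ.le]
    have h3 : 0 < β * (Real.exp (k * x) / 2) := by positivity
    rw [hf, Real.norm_eq_abs, abs_of_pos (inv_pos.mpr (hden x))]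
    calc (A + β * Real.cosh (k * x))⁻¹ ≤ (β * (Real.exp (k * x) / 2))⁻¹ :=
          inv_anti₀ h3 h2
      _ = 2 / β * Real.exp (-k * x) := by
          rw [neg_mul, Real.exp_neg]; field_simp
  have hIoi : IntegrableOn f (Ioi 0) := by
    refine Integrable.mono' ((exp_neg_integrableOn_Ioi 0 hk).const_mul (2 / β))
      hcont.aestronglyMeasurable.restrict ?_
    exact Filter.Eventually.of_forall hbound
  have hIic : IntegrableOn f (Iic 0) := by
    rw [IntegrableOn, ← Measure.map_neg_eq_self (volume : Measure ℝ)]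
    have m : MeasurableEmbedding fun x : ℝ => -x :=
      (Homeomorph.neg ℝ).measurableEmbedding
    rw [m.restrict_map, m.integrable_map_iff]
    have : f ∘ (fun x : ℝ => -x) = f := by
      funext x; simp [hf, mul_neg, Real.cosh_neg]
    rw [this]
    have hpre : (fun x : ℝ => -x) ⁻¹' Iic 0 = Ici 0 := by
      ext x; simp
    rw [hpre]
    exact Iff.mpr integrableOn_Ici_iff_integrableOn_Ioi hIoi
  have := hIic.union hIoi
  rwa [Iic_union_Ioi, integrableOn_univ] at this


lemma integral_inv_cosh_eq (β k : ℝ) (hβ : 0 < β) (hk : 0 < k) :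
    ∫ x : ℝ, (β + β * Real.cosh (k * x))⁻¹ = 2 / (k * β) := by
  set F : ℝ → ℝ := fun x => -2 / (k * β) * (Real.exp (k * x) + 1)⁻¹ with hF
  have hderiv : ∀ x : ℝ, HasDerivAt F ((β + β * Real.cosh (k * x))⁻¹) x := by
    intro x
    have he : HasDerivAt (fun x : ℝ => Real.exp (k * x)) (Real.exp (k * x) * k) x :=
      by simpa using ((hasDerivAt_id x).const_mul k).exp
    have h1 : HasDerivAt (fun x : ℝ => Real.exp (k * x) + 1) (Real.exp (k * x) * k) x :=
      he.add_const 1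
    have hne : Real.exp (k * x) + 1 ≠ 0 := by positivity
    have h2 := (h1.inv hne).const_mul (-2 / (k * β))
    convert h2 using 1
    case e'_4 => rfl
    case e'_5 => rfl
    case e'_8 => rfl
    have hepos := Real.exp_pos (k * x)
    rw [Real.cosh_eq, Real.exp_neg]
    field_simp
    ring
  have hbot : Tendsto F atBot (𝓝 (-2 / (k * β))) := by
    have he : Tendsto (fun x : ℝ => Real.exp (k * x)) atBot (𝓝 0) :=
      Real.tendsto_exp_atBot.comp (tendsto_id.const_mul_atBot hk)
    have := (((he.add_const 1).inv₀ (by norm_num)).const_mul (-2 / (k * β)))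
    simpa using this
  have htop : Tendsto F atTop (𝓝 0) := by
    have he : Tendsto (fun x : ℝ => Real.exp (k * x) + 1) atTop atTop :=
      (Real.tendsto_exp_atTop.comp (tendsto_id.const_mul_atTop hk)).atTop_add tendsto_const_nhds
    have := (he.inv_tendsto_atTop).const_mul (-2 / (k * β))
    simpa using this
  have := MeasureTheory.integral_of_hasDerivAt_of_tendsto hderiv
    (integrable_inv_add_cosh hβ hβ hk) hbot htop
  rw [this]; ring


lemma integral_inv_add_cosh (A β k : ℝ) (hβ : 0 < β) (hA : β < A) (hk : 0 < k) :
    ∫ x : ℝ, (A + β * Real.cosh (k * x))⁻¹ =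
      2 / (k * Real.sqrt (A ^ 2 - β ^ 2)) *
        Real.log ((A + Real.sqrt (A ^ 2 - β ^ 2)) / β) := by
  have hA0 : 0 < A := hβ.trans hA
  set d : ℝ := Real.sqrt (A ^ 2 - β ^ 2) with hdd
  have hd2 : d ^ 2 = A ^ 2 - β ^ 2 := Real.sq_sqrt (by nlinarith)
  have hd : 0 < d := Real.sqrt_pos.mpr (by nlinarith)
  have hdA : d < A := by nlinarith
  set p : ℝ := (A - d) / β with hp'
  set q : ℝ := (A + d) / β with hq'
  have hp : 0 < p := div_pos (by linarith) hβ
  have hq : 0 < q := div_pos (by linarith) hβ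
  set F : ℝ → ℝ := fun x => 1 / (k * d) *
    (Real.log (Real.exp (k * x) + p) - Real.log (Real.exp (k * x) + q)) with hF
  have hderiv : ∀ x : ℝ, HasDerivAt F ((A + β * Real.cosh (k * x))⁻¹) x := by
    intro x
    have he : HasDerivAt (fun x : ℝ => Real.exp (k * x)) (Real.exp (k * x) * k) x := by
      simpa using ((hasDerivAt_id x).const_mul k).exp
    have hepos := Real.exp_pos (k * x)
    have h1 : HasDerivAt (fun x : ℝ => Real.log (Real.exp (k * x) + p))
        ((Real.exp (k * x) * k) / (Real.exp (k * x) + p)) x :=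
      (he.add_const p).log (by positivity)
    have h2 : HasDerivAt (fun x : ℝ => Real.log (Real.exp (k * x) + q))
        ((Real.exp (k * x) * k) / (Real.exp (k * x) + q)) x :=
      (he.add_const q).log (by positivity)
    have h3 := (h1.sub h2).const_mul (1 / (k * d))
    convert h3 using 1
    case e'_4 => rfl
    case e'_5 => rfl
    case e'_8 => rfl
    rw [Real.cosh_eq, Real.exp_neg]
    set e := Real.exp (k * x) with he'
    have he1 : 0 < e + p := by positivity
    have he2 : 0 < e + q := by positivity
    simp only [hp', hq'] at he1 he2 ⊢
    rw [eq_comm]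
    have hh1 : (e + (A - d) / β) * (e + (A + d) / β) = e ^ 2 + 2 * A / β * e + 1 := by
      field_simp
      linear_combination (-1) * hd2
    rw [div_sub_div _ _ he1.ne' he2.ne', hh1]
    have hh2 : e * k * (e + (A + d) / β) - (e + (A - d) / β) * (e * k) = e * k * (2 * d / β) := by
      field_simp; ring
    rw [hh2]
    have hpos : (0:ℝ) < e ^ 2 + 2 * A / β * e + 1 := by positivity
    have h4 : 1 / (k * d) * (e * k * (2 * d / β) / (e ^ 2 + 2 * A / β * e + 1)) =
        2 * e / (β * e ^ 2 + 2 * A * e + β) := by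
      rw [eq_div_iff (by positivity)]
      field_simp
    rw [h4]
    have h5 : A + β * ((e + e⁻¹) / 2) = (β * e ^ 2 + 2 * A * e + β) / (2 * e) := by
      field_simp; ring
    rw [h5, inv_div]
  have hbot : Tendsto F atBot (𝓝 (1 / (k * d) * (Real.log p - Real.log q))) := by
    have he : Tendsto (fun x : ℝ => Real.exp (k * x)) atBot (𝓝 0) :=
      Real.tendsto_exp_atBot.comp (tendsto_id.const_mul_atBot hk)
    have l1 : Tendsto (fun x : ℝ => Real.log (Real.exp (k * x) + p)) atBot (𝓝 (Real.log p)) := by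
      have := (Real.continuousAt_log hp.ne').tendsto.comp (by simpa using he.add_const p)
      simpa [Function.comp_def] using this
    have l2 : Tendsto (fun x : ℝ => Real.log (Real.exp (k * x) + q)) atBot (𝓝 (Real.log q)) := by
      have := (Real.continuousAt_log hq.ne').tendsto.comp (by simpa using he.add_const q)
      simpa [Function.comp_def] using this
    exact (l1.sub l2).const_mul _
  have htop : Tendsto F atTop (𝓝 0) := by
    have he : Tendsto (fun x : ℝ => Real.exp (k * x)) atTop atTop :=
      Real.tendsto_exp_atTop.comp (tendsto_id.const_mul_atTop hk)
    have hr : Tendsto (fun x : ℝ => (Real.exp (k * x) + p) / (Real.exp (k * x) + q))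
        atTop (𝓝 1) := by
      have h0 : Tendsto (fun x : ℝ => (p - q) / (Real.exp (k * x) + q)) atTop (𝓝 0) :=
        Tendsto.div_atTop tendsto_const_nhds (he.atTop_add tendsto_const_nhds)
      have : Tendsto (fun x : ℝ => 1 + (p - q) / (Real.exp (k * x) + q)) atTop (𝓝 (1 + 0)) :=
        tendsto_const_nhds.add h0
      rw [add_zero] at this
      refine this.congr fun x => ?_
      have : (0:ℝ) < Real.exp (k * x) + q := by positivity
      field_simp
      ring
    have hlog : Tendsto (fun x : ℝ => Real.log ((Real.exp (k * x) + p) / (Real.exp (k * x) + q)))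
        atTop (𝓝 0) := by
      have := (Real.continuousAt_log one_ne_zero).tendsto.comp hr
      simpa [Function.comp_def] using this
    have heq : (fun x : ℝ => 1 / (k * d) *
        Real.log ((Real.exp (k * x) + p) / (Real.exp (k * x) + q))) = F := by
      funext x
      rw [hF]
      have h1 : (0:ℝ) < Real.exp (k * x) + p := by positivity
      have h2 : (0:ℝ) < Real.exp (k * x) + q := by positivity
      rw [Real.log_div h1.ne' h2.ne']
    have := hlog.const_mul (1 / (k * d))
    rw [heq] at this
    simpa using this
  have hint := MeasureTheory.integral_of_hasDerivAt_of_tendsto hderiv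
    (integrable_inv_add_cosh hβ hA0 hk) hbot htop
  rw [hint]
  have hpq : p * q = 1 := by
    rw [hp', hq']
    field_simp
    linear_combination -hd2
  have hql : Real.log q - Real.log p = 2 * Real.log q := by
    rw [← Real.log_div hq.ne' hp.ne']
    have h6 : q / p = q ^ 2 := by
      rw [div_eq_iff hp.ne']
      linear_combination (-q) * hpq
    rw [h6, Real.log_pow]
    push_cast
    ring
  rw [zero_sub]
  have h7 : -(1 / (k * d) * (Real.log p - Real.log q)) =
      1 / (k * d) * (Real.log q - Real.log p) := by ring
  rw [h7, hql]
  ring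

set_option maxHeartbeats 1000000 in
/-- Mass of the solitons in the cases `γ = 0` (i.e. `b = -3/16`) and `γ < 0`
(i.e. `b < -3/16`). -/
theorem stmt_5 (b γ ω : ℝ) (hγ : γ = 1 + 16 / 3 * b) (hω : 0 < ω) :
    (∀ c : ℝ, b = -3 / 16 → -2 * Real.sqrt ω < c → c < 0 →
      (∫ x : ℝ, (PhiB γ ω c x) ^ 2) = 4 * Real.sqrt (4 * ω - c ^ 2) / (-c)) ∧
    (∀ c : ℝ, b < -3 / 16 → -2 * Real.sqrt ω < c →
      c < -2 * Real.sqrt (-γ / (1 - γ)) * Real.sqrt ω →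
      (∫ x : ℝ, (PhiB γ ω c x) ^ 2) =
        4 / Real.sqrt (-γ) *
          Real.log (-c / Real.sqrt (c ^ 2 + γ * (4 * ω - c ^ 2)) +
            Real.sqrt ((-c / Real.sqrt (c ^ 2 + γ * (4 * ω - c ^ 2))) ^ 2 - 1))) := by
  have hsw : Real.sqrt ω ^ 2 = ω := Real.sq_sqrt hω.le
  have hswpos : 0 < Real.sqrt ω := Real.sqrt_pos.mpr hω
  constructor
  · intro c hb h1 h2
    have hγ0 : γ = 0 := by rw [hγ, hb]; norm_num
    have hc2 : c ^ 2 < 4 * ω := by nlinarith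
    set k : ℝ := Real.sqrt (4 * ω - c ^ 2) with hk'
    have hk : 0 < k := Real.sqrt_pos.mpr (by linarith)
    have hk2 : k ^ 2 = 4 * ω - c ^ 2 := Real.sq_sqrt (by linarith)
    have hPhi : ∀ x : ℝ, (PhiB γ ω c x) ^ 2 =
        2 * k ^ 2 * ((-c) + (-c) * Real.cosh (k * x))⁻¹ := by
      intro x
      rw [PhiB, hγ0]
      have hs : Real.sqrt (c ^ 2 + 0 * (4 * ω - c ^ 2)) = -c := by
        rw [zero_mul, add_zero, Real.sqrt_sq_eq_abs, abs_of_neg h2]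
      rw [hs]
      have hcosh := Real.one_le_cosh (k * x)
      have hden : 0 < -c * Real.cosh (k * x) - c := by nlinarith
      rw [Real.sq_sqrt (div_nonneg (by linarith) hden.le)]
      rw [div_eq_mul_inv]
      congr 1
      · rw [hk2]
      · ring
    simp_rw [hPhi]
    rw [MeasureTheory.integral_const_mul,
      integral_inv_cosh_eq (-c) k (by linarith) hk]
    rw [mul_div_assoc']
    rw [div_eq_div_iff (mul_pos hk (by linarith : (0:ℝ) < -c)).ne'
      (by linarith : (0:ℝ) < -c).ne']
    ring
  · intro c hb h1 h2
    have hγneg : γ < 0 := by rw [hγ]; nlinarith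
    set s : ℝ := Real.sqrt (-γ / (1 - γ)) with hs'
    have hs2 : s ^ 2 = -γ / (1 - γ) :=
      Real.sq_sqrt (div_nonneg (by linarith) (by linarith))
    have hspos : 0 < s := Real.sqrt_pos.mpr (div_pos (by linarith) (by linarith))
    have h1γ : (1:ℝ) - γ ≠ 0 := by intro h; nlinarith
    have hγs : s ^ 2 * (1 - γ) = -γ := by
      rw [hs2, div_mul_cancel₀ _ h1γ]
    have hc0 : c < 0 := lt_trans h2 (by nlinarith)
    have hc2 : c ^ 2 < 4 * ω := by nlinarith
    have hcs : 4 * s ^ 2 * ω < c ^ 2 := by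
      have ha : 0 < -c - 2 * s * Real.sqrt ω := by linarith
      have hp0 : 0 < 2 * s * Real.sqrt ω := by positivity
      have hb2 : 0 < -c + 2 * s * Real.sqrt ω := by linarith
      nlinarith [mul_pos ha hb2]
    have hB : 0 < c ^ 2 + γ * (4 * ω - c ^ 2) := by nlinarith
    set k : ℝ := Real.sqrt (4 * ω - c ^ 2) with hk'
    have hk : 0 < k := Real.sqrt_pos.mpr (by linarith)
    have hk2 : k ^ 2 = 4 * ω - c ^ 2 := Real.sq_sqrt (by linarith)
    set β : ℝ := Real.sqrt (c ^ 2 + γ * (4 * ω - c ^ 2)) with hβ'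
    have hβ : 0 < β := Real.sqrt_pos.mpr hB
    have hβ2 : β ^ 2 = c ^ 2 + γ * (4 * ω - c ^ 2) := Real.sq_sqrt hB.le
    have hγk : γ * (4 * ω - c ^ 2) < 0 := mul_neg_of_neg_of_pos hγneg (by linarith)
    have h8 : β ^ 2 < c ^ 2 := by rw [hβ2]; linarith
    have hβA : β < -c := by nlinarith [h8]
    have hPhi : ∀ x : ℝ, (PhiB γ ω c x) ^ 2 =
        2 * k ^ 2 * ((-c) + β * Real.cosh (k * x))⁻¹ := by
      intro x
      rw [PhiB, ← hβ', ← hk']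
      have hcosh := Real.one_le_cosh (k * x)
      have hden : 0 < β * Real.cosh (k * x) - c := by
        have h10 : β ≤ β * Real.cosh (k * x) := le_mul_of_one_le_right hβ.le hcosh
        linarith
      rw [Real.sq_sqrt (div_nonneg (by linarith) hden.le)]
      rw [div_eq_mul_inv]
      congr 1
      · rw [hk2]
      · ring
    simp_rw [hPhi]
    rw [MeasureTheory.integral_const_mul,
      integral_inv_add_cosh (-c) β k hβ hβA hk]
    have hd : Real.sqrt ((-c) ^ 2 - β ^ 2) = Real.sqrt (-γ) * k := by
      have : (-c) ^ 2 - β ^ 2 = (-γ) * k ^ 2 := by rw [hβ2, hk2]; ring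
      rw [this, Real.sqrt_mul (by linarith) (k ^ 2), Real.sqrt_sq hk.le]
    rw [hd]
    have hγr : 0 < Real.sqrt (-γ) := Real.sqrt_pos.mpr (by linarith)
    have harg : -c / β + Real.sqrt ((-c / β) ^ 2 - 1) = (-c + Real.sqrt (-γ) * k) / β := by
      have h9 : (-c / β) ^ 2 - 1 = ((-c) ^ 2 - β ^ 2) / β ^ 2 := by
        field_simp
      rw [h9, Real.sqrt_div (show (0:ℝ) ≤ (-c) ^ 2 - β ^ 2 by nlinarith [h8]) (β ^ 2),
        Real.sqrt_sq hβ.le, hd, ← add_div]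
    rw [harg, ← mul_assoc]
    congr 1
    rw [mul_div_assoc']
    rw [div_eq_div_iff (mul_pos hk (mul_pos hγr hk)).ne' hγr.ne']
    ring
end
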